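/- arXiv:1705.03137 — 2 statements merged into one kernel-verified Lean document; each statement's English description precedes it below -/
import Mathlib

section
/- Best-response updates weakly increase the potential: let μ = (i, I_{k-1}) be a meeting of dimension k and let S' ∈ N_k(μ, S) satisfy u_i(S') ≥ u_i(Ŝ) for all Ŝ ∈ N_k(μ, S) (i.e., S' is a best response of player i in the meeting). Then Φ(S') ≥ Φ(Ŝ) for all Ŝ ∈ N_k(μ, S); in particular Φ(S') ≥ Φ(S). -/
open Finset

noncomputable section

/-- A network state: the diagonal entry `S i i` is player `i`'s action status `a_i`,
and the off-diagonal entry `S i j` (for `i ≠ j`) is the link status `g_{ij}`. -/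
abbrev NetState (n : ℕ) := Fin n → Fin n → Bool

/-- Numerical (0/1) value of a Boolean coordinate. -/
def bv (x : Bool) : ℝ := if x then 1 else 0

/-- Player `i`'s payoff
`u_i(S) = a_i v_i + h a_i Σ_{j≠i} a_j + φ a_i Σ_{j≠i} g_{ij} g_{ji} a_j
  + Σ_{j≠i} g_{ij} w_{ij} + m Σ_{j≠i} g_{ij} g_{ji}
  + q Σ_{j,l pairwise distinct from each other and from i} g_{ij} g_{jl} g_{li}`. -/
def payoff (n : ℕ) (v : Fin n → ℝ) (w : Fin n → Fin n → ℝ) (h φ m q : ℝ)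
    (S : NetState n) (i : Fin n) : ℝ :=
  bv (S i i) * v i
    + h * bv (S i i) * ∑ j ∈ univ.filter (fun j => j ≠ i), bv (S j j)
    + φ * bv (S i i) * ∑ j ∈ univ.filter (fun j => j ≠ i), bv (S i j) * bv (S j i) * bv (S j j)
    + ∑ j ∈ univ.filter (fun j => j ≠ i), bv (S i j) * w i j
    + m * ∑ j ∈ univ.filter (fun j => j ≠ i), bv (S i j) * bv (S j i)
    + q * ∑ j ∈ univ.filter (fun j => j ≠ i),
        ∑ l ∈ univ.filter (fun l => l ≠ i ∧ l ≠ j),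
          bv (S i j) * bv (S j l) * bv (S l i)

/-- The potential
`Φ(S) = Σ_i a_i v_i + (h/2) Σ_{i≠j} a_i a_j + (φ/2) Σ_{i≠j} a_i a_j g_{ij} g_{ji}
  + Σ_{i≠j} g_{ij} w_{ij} + (m/2) Σ_{i≠j} g_{ij} g_{ji}
  + (q/3) Σ_{i,j,l pairwise distinct} g_{ij} g_{jl} g_{li}`. -/
def potential (n : ℕ) (v : Fin n → ℝ) (w : Fin n → Fin n → ℝ) (h φ m q : ℝ)
    (S : NetState n) : ℝ :=
  (∑ i, bv (S i i) * v i)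
    + (h / 2) * ∑ i, ∑ j ∈ univ.filter (fun j => j ≠ i), bv (S i i) * bv (S j j)
    + (φ / 2) * ∑ i, ∑ j ∈ univ.filter (fun j => j ≠ i),
        bv (S i i) * bv (S j j) * bv (S i j) * bv (S j i)
    + (∑ i, ∑ j ∈ univ.filter (fun j => j ≠ i), bv (S i j) * w i j)
    + (m / 2) * ∑ i, ∑ j ∈ univ.filter (fun j => j ≠ i), bv (S i j) * bv (S j i)
    + (q / 3) * ∑ i, ∑ j ∈ univ.filter (fun j => j ≠ i),
        ∑ l ∈ univ.filter (fun l => l ≠ i ∧ l ≠ j), bv (S i j) * bv (S j l) * bv (S l i)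

/-- `S'` belongs to the neighborhood `N_k((i,J), S)`: it agrees with `S` on all coordinates
except possibly `a_i` (the coordinate `(i,i)`) and the links `{g_{ij} : j ∈ J}`. -/
def inNbhd (n : ℕ) (i : Fin n) (J : Finset (Fin n)) (S S' : NetState n) : Prop :=
  ∀ x y : Fin n, ¬(x = i ∧ (y = i ∨ y ∈ J)) → S' x y = S x y

open scoped Classical in
/-- The neighborhood `N_k((i,J), S)` as a finite set of states. -/
noncomputable def nbhd (n : ℕ) (i : Fin n) (J : Finset (Fin n)) (S : NetState n) :
    Finset (NetState n) :=
  univ.filter (fun S' => inNbhd n i J S S')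

section helpers
variable {n : ℕ} (i : Fin n)

lemma sum_split (g : Fin n → ℝ) :
    ∑ x, g x = g i + ∑ x ∈ univ.filter (fun x => x ≠ i), g x := by
  rw [filter_ne', ← Finset.add_sum_erase _ g (mem_univ i)]

lemma sum_split_inner {x : Fin n} (hx : x ≠ i) (g : Fin n → ℝ) :
    ∑ y ∈ univ.filter (fun y => y ≠ x), g y
      = g i + ∑ y ∈ univ.filter (fun y => y ≠ x ∧ y ≠ i), g y := by
  have hset : univ.filter (fun y => y ≠ x ∧ y ≠ i)
      = (univ.filter (fun y => y ≠ x)).erase i := by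
    ext y; simp [and_comm]
  rw [hset, ← Finset.add_sum_erase _ g (by simp [hx.symm] : i ∈ univ.filter (fun y => y ≠ x))]

lemma sum_split_inner2 {x y : Fin n} (hx : x ≠ i) (hy : y ≠ i) (g : Fin n → ℝ) :
    ∑ l ∈ univ.filter (fun l => l ≠ x ∧ l ≠ y), g l
      = g i + ∑ l ∈ univ.filter (fun l => (l ≠ x ∧ l ≠ y) ∧ l ≠ i), g l := by
  have hset : univ.filter (fun l => (l ≠ x ∧ l ≠ y) ∧ l ≠ i)
      = (univ.filter (fun l => l ≠ x ∧ l ≠ y)).erase i := by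
    ext l; simp; tauto
  rw [hset, ← Finset.add_sum_erase _ g
    (by simp [hx.symm, hy.symm] : i ∈ univ.filter (fun l => l ≠ x ∧ l ≠ y))]

lemma double_diff_row (F F' : Fin n → Fin n → ℝ)
    (hag : ∀ x, x ≠ i → ∀ y, F' x y = F x y) :
    (∑ x, ∑ y ∈ univ.filter (fun y => y ≠ x), F' x y)
      - (∑ x, ∑ y ∈ univ.filter (fun y => y ≠ x), F x y)
    = (∑ y ∈ univ.filter (fun y => y ≠ i), F' i y)
      - (∑ y ∈ univ.filter (fun y => y ≠ i), F i y) := by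
  rw [sum_split i (fun x => ∑ y ∈ univ.filter (fun y => y ≠ x), F' x y),
    sum_split i (fun x => ∑ y ∈ univ.filter (fun y => y ≠ x), F x y)]
  have : ∑ x ∈ univ.filter (fun x => x ≠ i), ∑ y ∈ univ.filter (fun y => y ≠ x), F' x y
      = ∑ x ∈ univ.filter (fun x => x ≠ i), ∑ y ∈ univ.filter (fun y => y ≠ x), F x y := by
    refine Finset.sum_congr rfl fun x hx => Finset.sum_congr rfl fun y _ => ?_
    exact hag x (by simpa using hx) y
  rw [this]; ring

lemma double_diff_sym (F F' : Fin n → Fin n → ℝ)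
    (hsF : ∀ x y, F x y = F y x) (hsF' : ∀ x y, F' x y = F' y x)
    (hag : ∀ x y, x ≠ i → y ≠ i → F' x y = F x y) :
    (∑ x, ∑ y ∈ univ.filter (fun y => y ≠ x), F' x y)
      - (∑ x, ∑ y ∈ univ.filter (fun y => y ≠ x), F x y)
    = 2 * ((∑ y ∈ univ.filter (fun y => y ≠ i), F' i y)
      - (∑ y ∈ univ.filter (fun y => y ≠ i), F i y)) := by
  rw [sum_split i (fun x => ∑ y ∈ univ.filter (fun y => y ≠ x), F' x y),
    sum_split i (fun x => ∑ y ∈ univ.filter (fun y => y ≠ x), F x y)]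
  have e1 : ∑ x ∈ univ.filter (fun x => x ≠ i), ∑ y ∈ univ.filter (fun y => y ≠ x), F' x y
      = (∑ x ∈ univ.filter (fun x => x ≠ i), F' i x)
        + ∑ x ∈ univ.filter (fun x => x ≠ i),
            ∑ y ∈ univ.filter (fun y => y ≠ x ∧ y ≠ i), F' x y := by
    rw [← Finset.sum_add_distrib]
    refine Finset.sum_congr rfl fun x hx => ?_
    rw [sum_split_inner i (by simpa using hx) (F' x), hsF' x i]
  have e2 : ∑ x ∈ univ.filter (fun x => x ≠ i), ∑ y ∈ univ.filter (fun y => y ≠ x), F x y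
      = (∑ x ∈ univ.filter (fun x => x ≠ i), F i x)
        + ∑ x ∈ univ.filter (fun x => x ≠ i),
            ∑ y ∈ univ.filter (fun y => y ≠ x ∧ y ≠ i), F x y := by
    rw [← Finset.sum_add_distrib]
    refine Finset.sum_congr rfl fun x hx => ?_
    rw [sum_split_inner i (by simpa using hx) (F x), hsF x i]
  have e3 : ∑ x ∈ univ.filter (fun x => x ≠ i),
      ∑ y ∈ univ.filter (fun y => y ≠ x ∧ y ≠ i), F' x y
      = ∑ x ∈ univ.filter (fun x => x ≠ i),
        ∑ y ∈ univ.filter (fun y => y ≠ x ∧ y ≠ i), F x y := by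
    refine Finset.sum_congr rfl fun x hx => Finset.sum_congr rfl fun y hy => ?_
    have hy' : y ≠ x ∧ y ≠ i := by simpa using hy
    exact hag x y (by simpa using hx) hy'.2
  rw [e1, e2, e3]; ring

lemma triple_diff (F F' : Fin n → Fin n → Fin n → ℝ)
    (hcF : ∀ x y l, F x y l = F y l x) (hcF' : ∀ x y l, F' x y l = F' y l x)
    (hag : ∀ x y l, x ≠ i → y ≠ i → l ≠ i → F' x y l = F x y l) :
    (∑ x, ∑ y ∈ univ.filter (fun y => y ≠ x),
        ∑ l ∈ univ.filter (fun l => l ≠ x ∧ l ≠ y), F' x y l)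
      - (∑ x, ∑ y ∈ univ.filter (fun y => y ≠ x),
        ∑ l ∈ univ.filter (fun l => l ≠ x ∧ l ≠ y), F x y l)
    = 3 * ((∑ y ∈ univ.filter (fun y => y ≠ i),
          ∑ l ∈ univ.filter (fun l => l ≠ i ∧ l ≠ y), F' i y l)
        - (∑ y ∈ univ.filter (fun y => y ≠ i),
          ∑ l ∈ univ.filter (fun l => l ≠ i ∧ l ≠ y), F i y l)) := by
  have decomp : ∀ G : Fin n → Fin n → Fin n → ℝ,
      (∑ x, ∑ y ∈ univ.filter (fun y => y ≠ x),
        ∑ l ∈ univ.filter (fun l => l ≠ x ∧ l ≠ y), G x y l)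
      = (∑ y ∈ univ.filter (fun y => y ≠ i),
          ∑ l ∈ univ.filter (fun l => l ≠ i ∧ l ≠ y), G i y l)
        + (∑ x ∈ univ.filter (fun x => x ≠ i),
            ∑ l ∈ univ.filter (fun l => l ≠ x ∧ l ≠ i), G x i l)
        + (∑ x ∈ univ.filter (fun x => x ≠ i),
            ∑ y ∈ univ.filter (fun y => y ≠ x ∧ y ≠ i), G x y i)
        + (∑ x ∈ univ.filter (fun x => x ≠ i),
            ∑ y ∈ univ.filter (fun y => y ≠ x ∧ y ≠ i),
              ∑ l ∈ univ.filter (fun l => (l ≠ x ∧ l ≠ y) ∧ l ≠ i), G x y l) := by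
    intro G
    rw [sum_split i (fun x => ∑ y ∈ univ.filter (fun y => y ≠ x),
      ∑ l ∈ univ.filter (fun l => l ≠ x ∧ l ≠ y), G x y l)]
    have e1 : ∀ x, x ≠ i →
        (∑ y ∈ univ.filter (fun y => y ≠ x),
          ∑ l ∈ univ.filter (fun l => l ≠ x ∧ l ≠ y), G x y l)
        = (∑ l ∈ univ.filter (fun l => l ≠ x ∧ l ≠ i), G x i l)
          + ((∑ y ∈ univ.filter (fun y => y ≠ x ∧ y ≠ i), G x y i)
            + ∑ y ∈ univ.filter (fun y => y ≠ x ∧ y ≠ i),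
              ∑ l ∈ univ.filter (fun l => (l ≠ x ∧ l ≠ y) ∧ l ≠ i), G x y l) := by
      intro x hx
      rw [sum_split_inner i hx
        (fun y => ∑ l ∈ univ.filter (fun l => l ≠ x ∧ l ≠ y), G x y l)]
      congr 1
      rw [← Finset.sum_add_distrib]
      refine Finset.sum_congr rfl fun y hy => ?_
      have hy' : y ≠ x ∧ y ≠ i := by simpa using hy
      exact sum_split_inner2 i hx hy'.2 (fun l => G x y l)
    rw [Finset.sum_congr rfl (fun x hx => e1 x (by simpa using hx)),
      Finset.sum_add_distrib, Finset.sum_add_distrib]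
    ring
  rw [decomp F, decomp F']
  have hA : ∀ (G : Fin n → Fin n → Fin n → ℝ), (∀ x y l, G x y l = G y l x) →
      (∑ x ∈ univ.filter (fun x => x ≠ i),
        ∑ l ∈ univ.filter (fun l => l ≠ x ∧ l ≠ i), G x i l)
      = (∑ y ∈ univ.filter (fun y => y ≠ i),
          ∑ l ∈ univ.filter (fun l => l ≠ i ∧ l ≠ y), G i y l) := by
    intro G hc
    have step : (∑ x ∈ univ.filter (fun x => x ≠ i),
        ∑ l ∈ univ.filter (fun l => l ≠ x ∧ l ≠ i), G i l x)
        = ∑ l ∈ univ.filter (fun l => l ≠ i),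
            ∑ x ∈ univ.filter (fun x => (x ≠ l ∧ x ≠ i)), G i l x := by
      refine Finset.sum_comm' fun x l => ?_
      simp only [mem_filter, mem_univ, true_and]
      tauto
    calc (∑ x ∈ univ.filter (fun x => x ≠ i),
        ∑ l ∈ univ.filter (fun l => l ≠ x ∧ l ≠ i), G x i l)
        = (∑ x ∈ univ.filter (fun x => x ≠ i),
          ∑ l ∈ univ.filter (fun l => l ≠ x ∧ l ≠ i), G i l x) := by
          refine Finset.sum_congr rfl fun x _ => Finset.sum_congr rfl fun l _ => ?_
          rw [hc]
      _ = ∑ l ∈ univ.filter (fun l => l ≠ i),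
            ∑ x ∈ univ.filter (fun x => (x ≠ l ∧ x ≠ i)), G i l x := step
      _ = (∑ y ∈ univ.filter (fun y => y ≠ i),
          ∑ l ∈ univ.filter (fun l => l ≠ i ∧ l ≠ y), G i y l) := by
          refine Finset.sum_congr rfl fun y _ => ?_
          refine Finset.sum_congr ?_ fun l _ => rfl
          ext l; simp; tauto
  have hB : ∀ (G : Fin n → Fin n → Fin n → ℝ), (∀ x y l, G x y l = G y l x) →
      (∑ x ∈ univ.filter (fun x => x ≠ i),
        ∑ y ∈ univ.filter (fun y => y ≠ x ∧ y ≠ i), G x y i)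
      = (∑ y ∈ univ.filter (fun y => y ≠ i),
          ∑ l ∈ univ.filter (fun l => l ≠ i ∧ l ≠ y), G i y l) := by
    intro G hc
    refine Finset.sum_congr rfl fun x _ => ?_
    rw [Finset.sum_congr (by ext l; simp; tauto :
      univ.filter (fun l => l ≠ i ∧ l ≠ x) = univ.filter (fun y => y ≠ x ∧ y ≠ i))
      (fun l _ => rfl)]
    refine Finset.sum_congr rfl fun y _ => ?_
    rw [hc, hc]
  have hC : (∑ x ∈ univ.filter (fun x => x ≠ i),
      ∑ y ∈ univ.filter (fun y => y ≠ x ∧ y ≠ i),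
        ∑ l ∈ univ.filter (fun l => (l ≠ x ∧ l ≠ y) ∧ l ≠ i), F' x y l)
      = (∑ x ∈ univ.filter (fun x => x ≠ i),
      ∑ y ∈ univ.filter (fun y => y ≠ x ∧ y ≠ i),
        ∑ l ∈ univ.filter (fun l => (l ≠ x ∧ l ≠ y) ∧ l ≠ i), F x y l) := by
    refine Finset.sum_congr rfl fun x hx => Finset.sum_congr rfl fun y hy =>
      Finset.sum_congr rfl fun l hl => ?_
    have hx' : x ≠ i := by simpa using hx
    have hy' : y ≠ x ∧ y ≠ i := by simpa using hy
    have hl' : (l ≠ x ∧ l ≠ y) ∧ l ≠ i := by simpa using hl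
    exact hag x y l hx' hy'.2 hl'.2
  rw [hA F hcF, hA F' hcF', hB F hcF, hB F' hcF', hC]
  ring

end helpers

/-- The potential is an exact potential w.r.t. changes of player `i`'s row. -/
lemma exact_potential (n : ℕ) (v : Fin n → ℝ) (w : Fin n → Fin n → ℝ) (h φ m q : ℝ)
    (i : Fin n) (T T' : NetState n) (heq : ∀ x, x ≠ i → ∀ y, T' x y = T x y) :
    potential n v w h φ m q T' - potential n v w h φ m q T
      = payoff n v w h φ m q T' i - payoff n v w h φ m q T i := by
  have H1 : (∑ x, bv (T' x x) * v x) - (∑ x, bv (T x x) * v x)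
      = bv (T' i i) * v i - bv (T i i) * v i := by
    rw [sum_split i (fun x => bv (T' x x) * v x), sum_split i (fun x => bv (T x x) * v x)]
    have : ∑ x ∈ univ.filter (fun x => x ≠ i), bv (T' x x) * v x
        = ∑ x ∈ univ.filter (fun x => x ≠ i), bv (T x x) * v x := by
      refine Finset.sum_congr rfl fun x hx => ?_
      rw [heq x (by simpa using hx)]
    rw [this]; ring
  have hdiag : ∑ j ∈ univ.filter (fun j => j ≠ i), bv (T' j j)
      = ∑ j ∈ univ.filter (fun j => j ≠ i), bv (T j j) := by
    refine Finset.sum_congr rfl fun j hj => ?_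
    rw [heq j (by simpa using hj)]
  have H2 := double_diff_sym i (fun x y => bv (T x x) * bv (T y y))
    (fun x y => bv (T' x x) * bv (T' y y))
    (fun x y => by ring) (fun x y => by ring)
    (fun x y hx hy => by rw [heq x hx, heq y hy])
  have H3 := double_diff_sym i
    (fun x y => bv (T x x) * bv (T y y) * bv (T x y) * bv (T y x))
    (fun x y => bv (T' x x) * bv (T' y y) * bv (T' x y) * bv (T' y x))
    (fun x y => by ring) (fun x y => by ring)
    (fun x y hx hy => by rw [heq x hx, heq y hy, heq x hx, heq y hy])
  have H4 := double_diff_row i (fun x y => bv (T x y) * w x y)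
    (fun x y => bv (T' x y) * w x y)
    (fun x hx y => by rw [heq x hx])
  have H5 := double_diff_sym i (fun x y => bv (T x y) * bv (T y x))
    (fun x y => bv (T' x y) * bv (T' y x))
    (fun x y => by ring) (fun x y => by ring)
    (fun x y hx hy => by rw [heq x hx, heq y hy])
  have H6 := triple_diff i (fun x y l => bv (T x y) * bv (T y l) * bv (T l x))
    (fun x y l => bv (T' x y) * bv (T' y l) * bv (T' l x))
    (fun x y l => by ring) (fun x y l => by ring)
    (fun x y l hx hy hl => by rw [heq x hx, heq y hy, heq l hl])
  -- massage row sums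
  have r2 : (∑ y ∈ univ.filter (fun y => y ≠ i), bv (T' i i) * bv (T' y y))
      = bv (T' i i) * ∑ j ∈ univ.filter (fun j => j ≠ i), bv (T' j j) := by
    rw [Finset.mul_sum]
  have r2' : (∑ y ∈ univ.filter (fun y => y ≠ i), bv (T i i) * bv (T y y))
      = bv (T i i) * ∑ j ∈ univ.filter (fun j => j ≠ i), bv (T j j) := by
    rw [Finset.mul_sum]
  have r3 : (∑ y ∈ univ.filter (fun y => y ≠ i),
      bv (T' i i) * bv (T' y y) * bv (T' i y) * bv (T' y i))
      = bv (T' i i) * ∑ j ∈ univ.filter (fun j => j ≠ i),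
          bv (T' i j) * bv (T' j i) * bv (T' j j) := by
    rw [Finset.mul_sum]; exact Finset.sum_congr rfl fun j _ => by ring
  have r3' : (∑ y ∈ univ.filter (fun y => y ≠ i),
      bv (T i i) * bv (T y y) * bv (T i y) * bv (T y i))
      = bv (T i i) * ∑ j ∈ univ.filter (fun j => j ≠ i),
          bv (T i j) * bv (T j i) * bv (T j j) := by
    rw [Finset.mul_sum]; exact Finset.sum_congr rfl fun j _ => by ring
  rw [r2, r2', hdiag] at H2
  rw [r3, r3'] at H3
  unfold potential payoff
  rw [hdiag]
  linear_combination H1 + (h / 2) * H2 + (φ / 2) * H3 + H4 + (m / 2) * H5 + (q / 3) * H6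

/-- **Best-response updates weakly increase the potential.** Let `μ = (i, J)` be a meeting of
dimension `k` (so `i ∉ J` and `|J| = k − 1`) and let `S' ∈ N_k(μ, S)` be a best response of
player `i` in the meeting, i.e. `u_i(S') ≥ u_i(T)` for all `T ∈ N_k(μ, S)`. Then
`Φ(S') ≥ Φ(T)` for all `T ∈ N_k(μ, S)`; in particular `Φ(S') ≥ Φ(S)`. -/
theorem bestResponse_increases_potential (n k : ℕ) (hk : 1 < k) (hkn : k ≤ n)
    (v : Fin n → ℝ) (w : Fin n → Fin n → ℝ) (h φ m q : ℝ)
    (i : Fin n) (J : Finset (Fin n)) (hiJ : i ∉ J) (hJ : J.card = k - 1)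
    (S S' : NetState n) (hS' : inNbhd n i J S S')
    (hbr : ∀ T : NetState n, inNbhd n i J S T →
      payoff n v w h φ m q T i ≤ payoff n v w h φ m q S' i) :
    (∀ T : NetState n, inNbhd n i J S T →
        potential n v w h φ m q T ≤ potential n v w h φ m q S')
      ∧ potential n v w h φ m q S ≤ potential n v w h φ m q S' := by
  have main : ∀ T : NetState n, inNbhd n i J S T →
      potential n v w h φ m q T ≤ potential n v w h φ m q S' := by
    intro T hT
    have heq : ∀ x, x ≠ i → ∀ y, S' x y = T x y := by
      intro x hx y
      rw [hS' x y (by tauto), hT x y (by tauto)]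
    have := exact_potential n v w h φ m q i T S' heq
    have hle := hbr T hT
    linarith
  exact ⟨main, main S (fun x y _ => rfl)⟩
end
end

section
/- Stationary distribution of the k-player logit dynamic: let π(S) = exp(Φ(S)/β) / Σ_{Ŝ ∈ 𝒮_n} exp(Φ(Ŝ)/β). Then for every 1 < k ≤ n and every positive state-independent meeting distribution q(·) on meetings of dimension k, π is stationary for P_k, i.e. Σ_{S ∈ 𝒮_n} π(S) P_k(S, S') = π(S') for all S'; in particular the stationary distribution is the same for all k and all such meeting distributions. -/
open Finset

noncomputable section

open scoped Classical in
/-- Meetings of dimension `k`: pairs `(i, J)` with `i ∉ J` and `|J| = k - 1`. -/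
noncomputable def meetings (n k : ℕ) : Finset (Fin n × Finset (Fin n)) :=
  univ.filter (fun μ => μ.1 ∉ μ.2 ∧ μ.2.card = k - 1)

open scoped Classical in
/-- One-step transition kernel of the `k`-player logit dynamic:
`P_k(S, S') = Σ_{μ=(i,J) : S' ∈ N_k(μ,S)} q(μ) · exp(u_i(S')/β) / Σ_{T ∈ N_k(μ,S)} exp(u_i(T)/β)`. -/
noncomputable def kernel (n : ℕ) (v : Fin n → ℝ) (w : Fin n → Fin n → ℝ) (h φ m q : ℝ)
    (β : ℝ) (k : ℕ) (qm : Fin n × Finset (Fin n) → ℝ) (S S' : NetState n) : ℝ :=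
  ∑ μ ∈ (meetings n k).filter (fun μ => S' ∈ nbhd n μ.1 μ.2 S),
    qm μ * Real.exp (payoff n v w h φ m q S' μ.1 / β)
      / ∑ T ∈ nbhd n μ.1 μ.2 S, Real.exp (payoff n v w h φ m q T μ.1 / β)

/-- The stationary distribution `π(S) = exp(Φ(S)/β) / Σ_T exp(Φ(T)/β)`. -/
noncomputable def statDist (n : ℕ) (v : Fin n → ℝ) (w : Fin n → Fin n → ℝ) (h φ m q β : ℝ)
    (S : NetState n) : ℝ :=
  Real.exp (potential n v w h φ m q S / β)
    / ∑ T : NetState n, Real.exp (potential n v w h φ m q T / β)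

section Aux
variable {n : ℕ}
lemma erase_comm' (s : Finset (Fin n)) (a b : Fin n) : (s.erase a).erase b = (s.erase b).erase a := by
  ext l; simp only [Finset.mem_erase]; tauto
lemma erase3 (i x y : Fin n) :
    ((univ.erase x).erase y).erase i = ((((univ : Finset (Fin n))).erase i).erase x).erase y := by
  ext l; simp only [Finset.mem_erase]; tauto
lemma filter_pair (x y : Fin n) :
    univ.filter (fun l => l ≠ x ∧ l ≠ y) = (((univ : Finset (Fin n))).erase x).erase y := by
  ext l; simp only [Finset.mem_filter, Finset.mem_erase, Finset.mem_univ, true_and, and_true]; tauto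
lemma sum_erase_split {α : Type*} [Fintype α] [DecidableEq α] (i : α) (f : α → ℝ) :
    ∑ x, f x = f i + ∑ x ∈ univ.erase i, f x :=
  (Finset.add_sum_erase univ f (mem_univ i)).symm
lemma split_plain (i : Fin n) (f : Fin n → Fin n → ℝ) :
    ∑ x, ∑ y ∈ univ.erase x, f x y
      = (∑ y ∈ univ.erase i, f i y) + ∑ x ∈ univ.erase i, ∑ y ∈ univ.erase x, f x y :=
  sum_erase_split i _
lemma split_sym (i : Fin n) (f : Fin n → Fin n → ℝ) (hf : ∀ x y, f x y = f y x) :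
    ∑ x, ∑ y ∈ univ.erase x, f x y
      = 2 * ∑ y ∈ univ.erase i, f i y
        + ∑ x ∈ univ.erase i, ∑ y ∈ (univ.erase i).erase x, f x y := by
  rw [split_plain i]
  have h1 : ∑ x ∈ univ.erase i, ∑ y ∈ univ.erase x, f x y
      = ∑ x ∈ univ.erase i, (f x i + ∑ y ∈ (univ.erase i).erase x, f x y) := by
    refine Finset.sum_congr rfl fun x hx => ?_
    have hxi : x ≠ i := (Finset.mem_erase.mp hx).1
    rw [← Finset.add_sum_erase (univ.erase x) (f x)
      (Finset.mem_erase.mpr ⟨hxi.symm, mem_univ i⟩), erase_comm']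
  rw [h1, Finset.sum_add_distrib]
  have h2 : ∑ x ∈ univ.erase i, f x i = ∑ y ∈ univ.erase i, f i y :=
    Finset.sum_congr rfl fun x _ => hf x i
  rw [h2]; ring
lemma split_triple (i : Fin n) (f : Fin n → Fin n → Fin n → ℝ)
    (hf : ∀ x y l, f x y l = f y l x) :
    ∑ x, ∑ y ∈ univ.erase x, ∑ l ∈ (univ.erase x).erase y, f x y l
      = 3 * ∑ y ∈ univ.erase i, ∑ l ∈ (univ.erase i).erase y, f i y l
        + ∑ x ∈ univ.erase i, ∑ y ∈ (univ.erase i).erase x,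
            ∑ l ∈ ((univ.erase i).erase x).erase y, f x y l := by
  rw [sum_erase_split i (fun x => ∑ y ∈ univ.erase x, ∑ l ∈ (univ.erase x).erase y, f x y l)]
  have h1 : ∑ x ∈ univ.erase i, ∑ y ∈ univ.erase x, ∑ l ∈ (univ.erase x).erase y, f x y l
      = ∑ x ∈ univ.erase i,
          ((∑ l ∈ (univ.erase i).erase x, f x i l)
            + ((∑ y ∈ (univ.erase i).erase x, f x y i)
               + ∑ y ∈ (univ.erase i).erase x, ∑ l ∈ ((univ.erase i).erase x).erase y, f x y l)) := by
    refine Finset.sum_congr rfl fun x hx => ?_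
    have hxi : x ≠ i := (Finset.mem_erase.mp hx).1
    have hi : i ∈ univ.erase x := Finset.mem_erase.mpr ⟨hxi.symm, mem_univ i⟩
    rw [← Finset.add_sum_erase (univ.erase x)
      (fun y => ∑ l ∈ (univ.erase x).erase y, f x y l) hi]
    congr 1
    · rw [erase_comm']
    · rw [erase_comm' univ x i, ← Finset.sum_add_distrib]
      refine Finset.sum_congr rfl fun y hy => ?_
      have hyx : y ≠ x := (Finset.mem_erase.mp hy).1
      have hyi : y ≠ i := (Finset.mem_erase.mp (Finset.mem_erase.mp hy).2).1
      have hi2 : i ∈ (univ.erase x).erase y :=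
        Finset.mem_erase.mpr ⟨hyi.symm, Finset.mem_erase.mpr ⟨hxi.symm, mem_univ i⟩⟩
      rw [← Finset.add_sum_erase ((univ.erase x).erase y) (f x y) hi2, erase3]
  rw [h1, Finset.sum_add_distrib, Finset.sum_add_distrib]
  have hB : ∑ x ∈ univ.erase i, ∑ l ∈ (univ.erase i).erase x, f x i l
      = ∑ y ∈ univ.erase i, ∑ l ∈ (univ.erase i).erase y, f i y l := by
    have h3 : ∑ x ∈ univ.erase i, ∑ l ∈ (univ.erase i).erase x, f x i l
        = ∑ x ∈ univ.erase i, ∑ l ∈ (univ.erase i).erase x, f i l x :=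
      Finset.sum_congr rfl fun x _ => Finset.sum_congr rfl fun l _ => hf x i l
    rw [h3]
    exact Finset.sum_comm' (fun x y => by
      simp only [Finset.mem_erase, Finset.mem_univ, and_true]
      tauto)
  have hC : ∑ x ∈ univ.erase i, ∑ y ∈ (univ.erase i).erase x, f x y i
      = ∑ y ∈ univ.erase i, ∑ l ∈ (univ.erase i).erase y, f i y l :=
    Finset.sum_congr rfl fun x _ => Finset.sum_congr rfl fun y _ => by
      rw [hf x y i, hf y i x]
  rw [hB, hC]; ring
end Aux

/-- the part of the potential not involving row `i`. -/
def rest (n : ℕ) (v : Fin n → ℝ) (w : Fin n → Fin n → ℝ) (h φ m q : ℝ)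
    (i : Fin n) (S : NetState n) : ℝ :=
  (∑ x ∈ univ.erase i, bv (S x x) * v x)
    + (h / 2) * ∑ x ∈ univ.erase i, ∑ y ∈ (univ.erase i).erase x, bv (S x x) * bv (S y y)
    + (φ / 2) * ∑ x ∈ univ.erase i, ∑ y ∈ (univ.erase i).erase x,
        bv (S x x) * bv (S y y) * bv (S x y) * bv (S y x)
    + (∑ x ∈ univ.erase i, ∑ y ∈ univ.erase x, bv (S x y) * w x y)
    + (m / 2) * ∑ x ∈ univ.erase i, ∑ y ∈ (univ.erase i).erase x, bv (S x y) * bv (S y x)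
    + (q / 3) * ∑ x ∈ univ.erase i, ∑ y ∈ (univ.erase i).erase x,
        ∑ l ∈ ((univ.erase i).erase x).erase y, bv (S x y) * bv (S y l) * bv (S l x)

lemma potential_decomp (n : ℕ) (v : Fin n → ℝ) (w : Fin n → Fin n → ℝ) (h φ m q : ℝ)
    (i : Fin n) (S : NetState n) :
    potential n v w h φ m q S = payoff n v w h φ m q S i + rest n v w h φ m q i S := by
  unfold potential payoff rest
  simp only [Finset.filter_ne', filter_pair]
  rw [sum_erase_split i (fun x => bv (S x x) * v x),
    split_sym i (fun x y => bv (S x x) * bv (S y y)) (fun x y => by ring),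
    split_sym i (fun x y => bv (S x x) * bv (S y y) * bv (S x y) * bv (S y x)) (fun x y => by ring),
    split_plain i (fun x y => bv (S x y) * w x y),
    split_sym i (fun x y => bv (S x y) * bv (S y x)) (fun x y => by ring),
    split_triple i (fun x y l => bv (S x y) * bv (S y l) * bv (S l x)) (fun x y l => by ring)]
  have hA2 : ∑ y ∈ univ.erase i, bv (S i i) * bv (S y y)
      = bv (S i i) * ∑ y ∈ univ.erase i, bv (S y y) := by rw [Finset.mul_sum]
  have hA3 : ∑ y ∈ univ.erase i, bv (S i i) * bv (S y y) * bv (S i y) * bv (S y i)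
      = bv (S i i) * ∑ y ∈ univ.erase i, bv (S i y) * bv (S y i) * bv (S y y) := by
    rw [Finset.mul_sum]; exact Finset.sum_congr rfl fun y _ => by ring
  rw [hA2, hA3]; ring

lemma rest_congr (n : ℕ) (v : Fin n → ℝ) (w : Fin n → Fin n → ℝ) (h φ m q : ℝ)
    (i : Fin n) (S T : NetState n) (hrow : ∀ x, x ≠ i → S x = T x) :
    rest n v w h φ m q i S = rest n v w h φ m q i T := by
  unfold rest
  have key : ∀ x ∈ (univ : Finset (Fin n)).erase i, S x = T x :=
    fun x hx => hrow x (Finset.mem_erase.mp hx).1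
  congr 1
  congr 1
  congr 1
  congr 1
  congr 1
  · exact Finset.sum_congr rfl fun x hx => by rw [key x hx]
  · congr 1
    refine Finset.sum_congr rfl fun x hx => Finset.sum_congr rfl fun y hy => ?_
    rw [key x hx, key y (Finset.mem_erase.mp hy).2]
  · congr 1
    refine Finset.sum_congr rfl fun x hx => Finset.sum_congr rfl fun y hy => ?_
    rw [key x hx, key y (Finset.mem_erase.mp hy).2]
  · refine Finset.sum_congr rfl fun x hx => Finset.sum_congr rfl fun y _ => ?_
    rw [key x hx]
  · congr 1
    refine Finset.sum_congr rfl fun x hx => Finset.sum_congr rfl fun y hy => ?_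
    rw [key x hx, key y (Finset.mem_erase.mp hy).2]
  · congr 1
    refine Finset.sum_congr rfl fun x hx => Finset.sum_congr rfl fun y hy =>
      Finset.sum_congr rfl fun l hl => ?_
    rw [key x hx, key y (Finset.mem_erase.mp hy).2,
        key l (Finset.mem_erase.mp (Finset.mem_erase.mp hl).2).2]

lemma key_exp (n : ℕ) (v : Fin n → ℝ) (w : Fin n → Fin n → ℝ) (h φ m q : ℝ)
    (i : Fin n) (S T : NetState n) (hrow : ∀ x, x ≠ i → S x = T x) :
    potential n v w h φ m q S + payoff n v w h φ m q T i
      = potential n v w h φ m q T + payoff n v w h φ m q S i := by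
  rw [potential_decomp n v w h φ m q i S, potential_decomp n v w h φ m q i T,
    rest_congr n v w h φ m q i S T hrow]
  ring

lemma mem_nbhd {n : ℕ} {i : Fin n} {J : Finset (Fin n)} {S S' : NetState n} :
    S' ∈ nbhd n i J S ↔ inNbhd n i J S S' := by
  classical
  simp [nbhd]

lemma self_mem_nbhd {n : ℕ} {i : Fin n} {J : Finset (Fin n)} {S : NetState n} :
    S ∈ nbhd n i J S := mem_nbhd.mpr fun _ _ _ => rfl

lemma nbhd_eq_of_mem {n : ℕ} {i : Fin n} {J : Finset (Fin n)} {S S' : NetState n}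
    (hS' : S' ∈ nbhd n i J S) : nbhd n i J S = nbhd n i J S' := by
  have hr := mem_nbhd.mp hS'
  ext T
  simp only [mem_nbhd]
  constructor
  · intro hT x y hxy
    rw [hT x y hxy]; exact (hr x y hxy).symm
  · intro hT x y hxy
    rw [hT x y hxy]; exact hr x y hxy

lemma row_eq_of_mem {n : ℕ} {i : Fin n} {J : Finset (Fin n)} {S S' : NetState n}
    (hS : S ∈ nbhd n i J S') : ∀ x, x ≠ i → S x = S' x := by
  intro x hx
  funext y
  exact (mem_nbhd.mp hS) x y (fun hc => hx hc.1)


/-- **Stationary distribution of the `k`-player logit dynamic.** Let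
`π(S) = exp(Φ(S)/β) / Σ_T exp(Φ(T)/β)`. Then for every `1 < k ≤ n` and every positive
state-independent meeting distribution `qm` on meetings of dimension `k`, `π` is stationary
for `P_k`: `Σ_S π(S) P_k(S, S') = π(S')` for all `S'`. In particular the stationary
distribution is the same for all `k` and all such meeting distributions. -/
theorem stationary_distribution (n : ℕ) (hn : 2 ≤ n)
    (v : Fin n → ℝ) (w : Fin n → Fin n → ℝ) (h φ m q : ℝ) (β : ℝ) (hβ : 0 < β) :
    ∀ k : ℕ, 1 < k → k ≤ n →
      ∀ qm : Fin n × Finset (Fin n) → ℝ,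
        (∀ μ ∈ meetings n k, 0 < qm μ) →
        (∑ μ ∈ meetings n k, qm μ = 1) →
        ∀ S' : NetState n,
          ∑ S : NetState n, statDist n v w h φ m q β S * kernel n v w h φ m q β k qm S S'
            = statDist n v w h φ m q β S' := by
  classical
  intro k hk1 hkn qm hqpos hqsum S'
  have hZpos : 0 < ∑ T : NetState n, Real.exp (potential n v w h φ m q T / β) :=
    Finset.sum_pos (fun T _ => Real.exp_pos _) ⟨fun _ _ => false, mem_univ _⟩
  set Z : ℝ := ∑ T : NetState n, Real.exp (potential n v w h φ m q T / β) with hZdef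
  have hker : ∀ S : NetState n,
      statDist n v w h φ m q β S * kernel n v w h φ m q β k qm S S'
        = ∑ μ ∈ meetings n k,
            (if S' ∈ nbhd n μ.1 μ.2 S then
              statDist n v w h φ m q β S *
                (qm μ * Real.exp (payoff n v w h φ m q S' μ.1 / β)
                  / ∑ T ∈ nbhd n μ.1 μ.2 S, Real.exp (payoff n v w h φ m q T μ.1 / β))
            else 0) := by
    intro S
    rw [kernel, Finset.sum_filter, Finset.mul_sum]
    exact Finset.sum_congr rfl fun μ _ => by split <;> simp
  rw [Finset.sum_congr rfl fun S _ => hker S, Finset.sum_comm]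
  have hinner : ∀ μ ∈ meetings n k,
      (∑ S : NetState n,
        (if S' ∈ nbhd n μ.1 μ.2 S then
          statDist n v w h φ m q β S *
            (qm μ * Real.exp (payoff n v w h φ m q S' μ.1 / β)
              / ∑ T ∈ nbhd n μ.1 μ.2 S, Real.exp (payoff n v w h φ m q T μ.1 / β))
        else 0))
        = qm μ * statDist n v w h φ m q β S' := by
    intro μ _
    rw [← Finset.sum_filter]
    have hset : (univ : Finset (NetState n)).filter (fun S => S' ∈ nbhd n μ.1 μ.2 S)
        = nbhd n μ.1 μ.2 S' := by
      ext S
      simp only [Finset.mem_filter, Finset.mem_univ, true_and, mem_nbhd]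
      constructor
      · intro hh x y hxy; exact (hh x y hxy).symm
      · intro hh x y hxy; exact (hh x y hxy).symm
    rw [hset]
    set D : ℝ := ∑ T ∈ nbhd n μ.1 μ.2 S', Real.exp (payoff n v w h φ m q T μ.1 / β) with hDdef
    have hDpos : 0 < D :=
      Finset.sum_pos (fun T _ => Real.exp_pos _) ⟨S', self_mem_nbhd⟩
    have hterm : ∀ S ∈ nbhd n μ.1 μ.2 S',
        statDist n v w h φ m q β S *
          (qm μ * Real.exp (payoff n v w h φ m q S' μ.1 / β)
            / ∑ T ∈ nbhd n μ.1 μ.2 S, Real.exp (payoff n v w h φ m q T μ.1 / β))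
          = qm μ * statDist n v w h φ m q β S' *
              (Real.exp (payoff n v w h φ m q S μ.1 / β) / D) := by
      intro S hS
      have hDS : (∑ T ∈ nbhd n μ.1 μ.2 S, Real.exp (payoff n v w h φ m q T μ.1 / β)) = D := by
        rw [hDdef, nbhd_eq_of_mem hS]
      rw [hDS]
      have hprod : Real.exp (potential n v w h φ m q S / β) *
            Real.exp (payoff n v w h φ m q S' μ.1 / β)
          = Real.exp (potential n v w h φ m q S' / β) *
              Real.exp (payoff n v w h φ m q S μ.1 / β) := by
        rw [← Real.exp_add, ← Real.exp_add, ← add_div, ← add_div,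
          key_exp n v w h φ m q μ.1 S S' (row_eq_of_mem hS)]
      simp only [statDist]
      rw [hZdef] at *
      field_simp
      ring_nf
      ring_nf at hprod
      linear_combination qm μ * hprod
    rw [Finset.sum_congr rfl hterm, ← Finset.mul_sum, ← Finset.sum_div, ← hDdef,
      div_self hDpos.ne']
    ring
  rw [Finset.sum_congr rfl hinner, ← Finset.sum_mul, hqsum, one_mul]
end
end
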